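/- arXiv:2104.13229 — 2 statements merged into one kernel-verified Lean document; each statement's English description precedes it below -/
import Mathlib

section
/- Let 0 < r ≤ B be real numbers and h : [0,r] → ℝ continuous, h(0)=0, differentiable on (0,r), strictly increasing, with s_h := sup_{0<t<r} h(t)/(t·h'(t)) < ∞. Then the function t ↦ h(t) · ln(B·e^{s_h}/t) is increasing on (0,r]. -/
/-- If `0 < r ≤ B`, `h` is continuous on `[0,r]`, `h 0 = 0`, strictly increasing,
differentiable on `(0,r)` with positive derivative and `h t / (t * h' t) ≤ s`,
then `t ↦ h t * log (B * exp s / t)` is increasing on `(0,r]`. -/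
theorem stmt_1 (r B : ℝ) (hr : 0 < r) (hrB : r ≤ B) (h h' : ℝ → ℝ) (s : ℝ)
    (hcont : ContinuousOn h (Set.Icc 0 r)) (h0 : h 0 = 0)
    (hmono : StrictMonoOn h (Set.Icc 0 r))
    (hderiv : ∀ t ∈ Set.Ioo 0 r, HasDerivAt h (h' t) t)
    (hpos : ∀ t ∈ Set.Ioo 0 r, 0 < h' t)
    (hsup : ∀ t ∈ Set.Ioo 0 r, h t / (t * h' t) ≤ s) :
    MonotoneOn (fun t => h t * Real.log (B * Real.exp s / t)) (Set.Ioc 0 r) := by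
  have hB : 0 < B := lt_of_lt_of_le hr hrB
  have hC : 0 < B * Real.exp s := mul_pos hB (Real.exp_pos s)
  set f : ℝ → ℝ := fun t => h t * Real.log (B * Real.exp s / t) with hf
  -- derivative of f at interior points
  have key : ∀ t ∈ Set.Ioo 0 r,
      HasDerivAt f (h' t * Real.log (B * Real.exp s / t) - h t / t) t := by
    intro t ht
    obtain ⟨ht0, htr⟩ := ht
    have hgt : HasDerivAt (fun t => h t * (Real.log (B * Real.exp s) - Real.log t))
        (h' t * (Real.log (B * Real.exp s) - Real.log t) +
          h t * (0 - t⁻¹)) t := by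
      exact (hderiv t ⟨ht0, htr⟩).mul ((hasDerivAt_const t _).sub (Real.hasDerivAt_log ht0.ne'))
    have heq : f =ᶠ[nhds t] fun t => h t * (Real.log (B * Real.exp s) - Real.log t) := by
      filter_upwards [eventually_gt_nhds ht0] with x hx
      rw [hf]
      simp [Real.log_div hC.ne' hx.ne']
    have := hgt.congr_of_eventuallyEq heq
    refine this.congr_deriv ?_
    rw [Real.log_div hC.ne' ht0.ne']
    ring
  apply monotoneOn_of_deriv_nonneg (convex_Ioc 0 r)
  · -- continuity
    apply ContinuousOn.mul (hcont.mono Set.Ioc_subset_Icc_self)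
    apply ContinuousOn.log
    · exact continuousOn_const.div continuousOn_id (fun x hx => hx.1.ne')
    · intro x hx
      exact (div_pos hC hx.1).ne'
  · rw [interior_Ioc]
    exact fun t ht => ((key t ht).differentiableAt).differentiableWithinAt
  · rw [interior_Ioc]
    intro t ht
    rw [(key t ht).deriv]
    obtain ⟨ht0, htr⟩ := ht
    have hht : 0 < h t := by
      rw [← h0]
      exact hmono ⟨le_refl 0, hr.le⟩ ⟨ht0.le, htr.le⟩ ht0
    have hh't := hpos t ⟨ht0, htr⟩
    have hs : h t / t ≤ s * h' t := by
      have := hsup t ⟨ht0, htr⟩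
      rw [div_le_iff₀ (mul_pos ht0 hh't)] at this
      rw [div_le_iff₀ ht0]
      nlinarith
    have hlog : s ≤ Real.log (B * Real.exp s / t) := by
      rw [Real.log_div hC.ne' ht0.ne', Real.log_mul hB.ne' (Real.exp_pos s).ne',
        Real.log_exp]
      have : Real.log t ≤ Real.log B := Real.log_le_log ht0 (htr.le.trans hrB)
      linarith
    have : s * h' t ≤ h' t * Real.log (B * Real.exp s / t) := by
      rw [mul_comm s]
      exact mul_le_mul_of_nonneg_left hlog hh't.le
    linarith
end

section
/- Let 0 < r ≤ B, and let h : [0,r] → ℝ be continuous, h(0)=0, strictly increasing, differentiable on (0,r) with s_h := sup_{0<t<r} h(t)/(t·h'(t)) < ∞. Then the function x ↦ x · ln(B·e^{s_h}/h⁻¹(x)) is increasing on [0, h(r)], where h⁻¹ is the inverse of h. -/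
/-- If `0 < r ≤ B`, `h` is continuous and strictly increasing on `[0,r]`, `h 0 = 0`,
differentiable on `(0,r)` with positive derivative and `h t / (t * h' t) ≤ s`, and
`hinv` is the inverse of `h` mapping `[0, h r]` onto `[0,r]`, then
`x ↦ x * log (B * exp s / hinv x)` is increasing on `[0, h r]`. -/
theorem stmt_2 (r B : ℝ) (hr : 0 < r) (hrB : r ≤ B) (h h' hinv : ℝ → ℝ) (s : ℝ)
    (hcont : ContinuousOn h (Set.Icc 0 r)) (h0 : h 0 = 0)
    (hmono : StrictMonoOn h (Set.Icc 0 r))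
    (hderiv : ∀ t ∈ Set.Ioo 0 r, HasDerivAt h (h' t) t)
    (hpos : ∀ t ∈ Set.Ioo 0 r, 0 < h' t)
    (hsup : ∀ t ∈ Set.Ioo 0 r, h t / (t * h' t) ≤ s)
    (hinv_mem : ∀ x ∈ Set.Icc 0 (h r), hinv x ∈ Set.Icc 0 r)
    (hinv_eq : ∀ x ∈ Set.Icc 0 (h r), h (hinv x) = x)
    (hinv_eq' : ∀ t ∈ Set.Icc 0 r, hinv (h t) = t) :
    MonotoneOn (fun x => x * Real.log (B * Real.exp s / hinv x)) (Set.Icc 0 (h r)) := by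
  have hB : 0 < B := lt_of_lt_of_le hr hrB
  set c : ℝ := B * Real.exp s with hc_def
  have hc : 0 < c := mul_pos hB (Real.exp_pos s)
  -- s is positive
  have hspos : 0 < s := by
    have ht : r / 2 ∈ Set.Ioo 0 r := ⟨by linarith, by linarith⟩
    have hh : 0 < h (r / 2) := by
      have := hmono (Set.mem_Icc.2 ⟨le_refl 0, hr.le⟩)
        (Set.mem_Icc.2 ⟨ht.1.le, ht.2.le⟩) ht.1
      linarith [h0 ▸ this]
    have hd : 0 < r / 2 * h' (r / 2) := mul_pos ht.1 (hpos _ ht)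
    exact lt_of_lt_of_le (div_pos hh hd) (hsup _ ht)
  -- log bound : for 0 < t ≤ r, s ≤ log c - log t
  have hlog : ∀ t : ℝ, 0 < t → t ≤ r → s ≤ Real.log c - Real.log t := by
    intro t ht htr
    have : Real.log t ≤ Real.log B := Real.log_le_log ht (le_trans htr hrB)
    have hlc : Real.log c = Real.log B + s := by
      rw [hc_def, Real.log_mul hB.ne' (Real.exp_pos s).ne', Real.log_exp]
    linarith
  -- the substituted function is monotone on (0, r]
  have GMono : MonotoneOn (fun t => h t * (Real.log c - Real.log t)) (Set.Ioc 0 r) := by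
    apply monotoneOn_of_deriv_nonneg (convex_Ioc 0 r)
    · exact (hcont.mono Set.Ioc_subset_Icc_self).mul
        (continuousOn_const.sub (Real.continuousOn_log.mono fun x hx => ne_of_gt hx.1))
    · intro x hx
      rw [interior_Ioc] at hx
      exact ((hderiv x hx).mul
        ((hasDerivAt_const x (Real.log c)).sub (Real.hasDerivAt_log hx.1.ne'))).differentiableAt.differentiableWithinAt
    · intro x hx
      rw [interior_Ioc] at hx
      have hd : HasDerivAt (fun t => h t * (Real.log c - Real.log t))
          (h' x * (Real.log c - Real.log x) + h x * (0 - x⁻¹)) x :=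
        (hderiv x hx).mul ((hasDerivAt_const x (Real.log c)).sub (Real.hasDerivAt_log hx.1.ne'))
      rw [hd.deriv]
      have h1 : h x / (x * h' x) ≤ s := hsup x hx
      have hx0 : 0 < x := hx.1
      have hh' : 0 < h' x := hpos x hx
      have h2 : h x ≤ s * (x * h' x) := (div_le_iff₀ (mul_pos hx0 hh')).1 h1
      have h3 : s ≤ Real.log c - Real.log x := hlog x hx0 hx.2.le
      have h4 : s * h' x ≤ (Real.log c - Real.log x) * h' x :=
        mul_le_mul_of_nonneg_right h3 hh'.le
      have h5 : h x * x⁻¹ ≤ h' x * (Real.log c - Real.log x) := by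
        calc h x * x⁻¹ = h x / x := by ring
          _ ≤ s * (x * h' x) / x := by gcongr
          _ = s * h' x := by field_simp
          _ ≤ (Real.log c - Real.log x) * h' x := h4
          _ = h' x * (Real.log c - Real.log x) := by ring
      nlinarith [h5]
  -- nonnegativity of the function on the interval
  have hFnonneg : ∀ x ∈ Set.Icc 0 (h r), 0 ≤ x * Real.log (c / hinv x) := by
    intro x hx
    rcases eq_or_lt_of_le hx.1 with heq | hlt
    · rw [← heq]; simp
    · have ht := hinv_mem x hx
      have htpos : 0 < hinv x := by
        rcases eq_or_lt_of_le ht.1 with he | hl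
        · exfalso
          have := hinv_eq x hx
          rw [← he] at this
          rw [h0] at this; linarith
        · exact hl
      have := hlog (hinv x) htpos ht.2
      have hlogpos : 0 ≤ Real.log (c / hinv x) := by
        rw [Real.log_div hc.ne' htpos.ne']
        linarith
      exact mul_nonneg hlt.le hlogpos
  -- main argument
  intro x₁ hx₁ x₂ hx₂ hle
  simp only
  rcases eq_or_lt_of_le hx₁.1 with heq | hlt₁
  · rw [← heq]
    simpa using hFnonneg x₂ hx₂
  · -- both positive
    have hlt₂ : 0 < x₂ := lt_of_lt_of_le hlt₁ hle
    have ht₁ := hinv_mem x₁ hx₁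
    have ht₂ := hinv_mem x₂ hx₂
    have he₁ := hinv_eq x₁ hx₁
    have he₂ := hinv_eq x₂ hx₂
    have ht₁pos : 0 < hinv x₁ := by
      rcases eq_or_lt_of_le ht₁.1 with he | hl
      · exfalso; rw [← he, h0] at he₁; linarith
      · exact hl
    have ht₂pos : 0 < hinv x₂ := by
      rcases eq_or_lt_of_le ht₂.1 with he | hl
      · exfalso; rw [← he, h0] at he₂; linarith
      · exact hl
    have htle : hinv x₁ ≤ hinv x₂ := by
      by_contra hcon
      push_neg at hcon
      have := hmono ht₂ ht₁ hcon
      rw [he₁, he₂] at this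
      linarith
    have key := GMono (Set.mem_Ioc.2 ⟨ht₁pos, ht₁.2⟩) (Set.mem_Ioc.2 ⟨ht₂pos, ht₂.2⟩) htle
    simp only at key
    rw [he₁, he₂] at key
    calc x₁ * Real.log (c / hinv x₁)
        = x₁ * (Real.log c - Real.log (hinv x₁)) := by
          rw [Real.log_div hc.ne' ht₁pos.ne']
      _ ≤ x₂ * (Real.log c - Real.log (hinv x₂)) := key
      _ = x₂ * Real.log (c / hinv x₂) := by
          rw [Real.log_div hc.ne' ht₂pos.ne']
end
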